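/- arXiv:1003.5238 — 2 statements merged into one kernel-verified Lean document; each statement's English description precedes it below -/
import Mathlib

section
/- If the splitting function φ : ℝ^n × ℝ^n → ℝ^n satisfies φ(x,x) = f(x) and the Lipschitz condition ‖φ(x,y) − φ(x̃,ỹ)‖ ≤ μ‖x−x̃‖ + η‖y−ỹ‖, and x^k are the waveform relaxation iterates on [0,T] (solutions of ẋ^{k+1} = φ(x^{k+1}, x^k) with x^{k+1}(0) = x₀), with x̄ the exact solution of ẋ = f(x), x̄(0) = x₀, then the error E_k = x^k − x̄ satisfies sup_{t∈[0,T]} ‖E_k(t)‖ ≤ (C^k η^k T^k / k!) · sup_{t∈[0,T]} ‖E_0(t)‖, where C = e^{μT}. -/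
open Set

/-- Grönwall-type inequality with polynomial forcing term. -/
lemma gronwall_poly_forcing {E : Type*} [NormedAddCommGroup E] [NormedSpace ℝ E]
    {g g' : ℝ → E} {μ D T : ℝ} (k : ℕ) (hμ : 0 ≤ μ) (hD : 0 ≤ D)
    (hg : ContinuousOn g (Icc 0 T))
    (hg' : ∀ t ∈ Ico 0 T, HasDerivWithinAt g (g' t) (Ici t) t)
    (h0 : g 0 = 0)
    (hb : ∀ t ∈ Ico 0 T, ‖g' t‖ ≤ μ * ‖g t‖ + D * t ^ k) :
    ∀ t ∈ Icc 0 T, ‖g t‖ ≤ D / (k + 1) * t ^ (k + 1) * Real.exp (μ * t) := by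
  intro t ht
  have hkne : ((k : ℝ) + 1) ≠ 0 := by positivity
  refine le_of_forall_pos_le_add fun δ hδ => ?_
  set ε : ℝ := δ / Real.exp ((μ + 1) * t) with hε
  have hεpos : 0 < ε := by positivity
  set B : ℝ → ℝ := fun s => D / (k + 1) * s ^ (k + 1) * Real.exp (μ * s)
      + ε * Real.exp ((μ + 1) * s) with hB
  set B' : ℝ → ℝ := fun s => D * s ^ k * Real.exp (μ * s)
      + μ * (D / (k + 1) * s ^ (k + 1) * Real.exp (μ * s))
      + (μ + 1) * ε * Real.exp ((μ + 1) * s) with hB'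
  have hBder : ∀ s, HasDerivAt B (B' s) s := by
    intro s
    have he1 : HasDerivAt (fun s : ℝ => Real.exp (μ * s)) (Real.exp (μ * s) * μ) s := by
      simpa using ((hasDerivAt_id s).const_mul μ).exp
    have he2 : HasDerivAt (fun s : ℝ => Real.exp ((μ + 1) * s))
        (Real.exp ((μ + 1) * s) * (μ + 1)) s := by
      simpa using ((hasDerivAt_id s).const_mul (μ + 1)).exp
    have hp : HasDerivAt (fun s : ℝ => s ^ (k + 1)) ((k + 1 : ℕ) * s ^ k) s := by
      simpa using hasDerivAt_pow (k + 1) s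
    have := (((hp.const_mul (D / (k + 1))).mul he1).add (he2.const_mul ε))
    convert this using 1
    case e'_4 => rfl
    case e'_5 => rfl
    case e'_8 => rfl
    simp only [hB']
    push_cast
    field_simp
  have key : ∀ s ∈ Icc (0 : ℝ) T, ‖g s‖ ≤ B s := by
    refine fun s hs =>
      image_norm_le_of_norm_deriv_right_lt_deriv_boundary hg hg' ?_ hBder ?_ hs
    · simp [hB, h0, hεpos.le]
    · intro s hs hEq
      have hs0 : 0 ≤ s := hs.1
      have h1 : ‖g' s‖ ≤ μ * ‖g s‖ + D * s ^ k := hb s hs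
      rw [hEq] at h1
      refine h1.trans_lt ?_
      have hexp1 : (1 : ℝ) ≤ Real.exp (μ * s) := by
        rw [← Real.exp_zero]
        exact Real.exp_le_exp.2 (by positivity)
      have h2 : D * s ^ k ≤ D * s ^ k * Real.exp (μ * s) := by
        nlinarith [pow_nonneg hs0 k, mul_nonneg hD (pow_nonneg hs0 k)]
      have h3 : 0 < ε * Real.exp ((μ + 1) * s) := by positivity
      simp only [hB, hB']
      nlinarith
  have := key t ht
  simp only [hB] at this
  have hεδ : ε * Real.exp ((μ + 1) * t) = δ := by
    rw [hε]
    field_simp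
  linarith

/-- Superlinear error bound for waveform relaxation (Proposition 2.1). -/
theorem waveform_relaxation_error_bound
    (n : ℕ) (T μ η : ℝ) (hT : 0 < T) (hμ : 0 ≤ μ) (hη : 0 ≤ η)
    (f : EuclideanSpace ℝ (Fin n) → EuclideanSpace ℝ (Fin n))
    (φ : EuclideanSpace ℝ (Fin n) → EuclideanSpace ℝ (Fin n) → EuclideanSpace ℝ (Fin n))
    (hsplit : ∀ x, φ x x = f x)
    (hLip : ∀ x x' y y', ‖φ x y - φ x' y'‖ ≤ μ * ‖x - x'‖ + η * ‖y - y'‖)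
    (x₀ : EuclideanSpace ℝ (Fin n))
    (x : ℕ → ℝ → EuclideanSpace ℝ (Fin n))
    (xbar : ℝ → EuclideanSpace ℝ (Fin n))
    (hx0cont : ContinuousOn (x 0) (Icc 0 T))
    (hx0init : x 0 0 = x₀)
    (hxinit : ∀ k, x (k + 1) 0 = x₀)
    (hxode : ∀ k, ∀ t ∈ Icc 0 T, HasDerivAt (x (k + 1)) (φ (x (k + 1) t) (x k t)) t)
    (hxbarinit : xbar 0 = x₀)
    (hxbarode : ∀ t ∈ Icc 0 T, HasDerivAt xbar (f (xbar t)) t) :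
    ∀ k : ℕ, ∀ t ∈ Icc 0 T,
      ‖x k t - xbar t‖ ≤
        (Real.exp (μ * T)) ^ k * η ^ k * T ^ k / (Nat.factorial k) *
          ⨆ s : Icc (0 : ℝ) T, ‖x 0 s - xbar s‖ := by
  set M : ℝ := ⨆ s : Icc (0 : ℝ) T, ‖x 0 s - xbar s‖ with hMdef
  have hxbarcont : ContinuousOn xbar (Icc 0 T) := fun t ht =>
    (hxbarode t ht).continuousAt.continuousWithinAt
  have hbdd : BddAbove (Set.range fun s : Icc (0 : ℝ) T => ‖x 0 s - xbar s‖) := by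
    have hc : Continuous fun s : Icc (0 : ℝ) T => ‖x 0 s - xbar s‖ :=
      ((hx0cont.sub hxbarcont).norm).restrict
    exact (isCompact_range hc).bddAbove
  have hM0 : ∀ t ∈ Icc (0 : ℝ) T, ‖x 0 t - xbar t‖ ≤ M := fun t ht =>
    le_ciSup hbdd ⟨t, ht⟩
  have hMnn : 0 ≤ M := le_trans (norm_nonneg _) (hM0 0 ⟨le_refl _, hT.le⟩)
  have claim : ∀ k : ℕ, ∀ t ∈ Icc (0 : ℝ) T,
      ‖x k t - xbar t‖ ≤
        (Real.exp (μ * T)) ^ k * η ^ k * t ^ k / (Nat.factorial k) * M := by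
    intro k
    induction k with
    | zero => intro t ht; simpa using hM0 t ht
    | succ k ih =>
      set C : ℝ := Real.exp (μ * T) with hC
      have hC1 : (1 : ℝ) ≤ C := by
        rw [hC, ← Real.exp_zero]
        exact Real.exp_le_exp.2 (by positivity)
      have hC0 : (0 : ℝ) ≤ C := le_trans zero_le_one hC1
      set D : ℝ := C ^ k * η ^ k / (Nat.factorial k) * M * η with hD
      have hDnn : 0 ≤ D := by positivity
      set g : ℝ → EuclideanSpace ℝ (Fin n) := fun t => x (k + 1) t - xbar t with hg
      set g' : ℝ → EuclideanSpace ℝ (Fin n) :=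
        fun t => φ (x (k + 1) t) (x k t) - f (xbar t) with hg'
      have hgder : ∀ t ∈ Icc (0 : ℝ) T, HasDerivAt g (g' t) t := fun t ht =>
        (hxode k t ht).sub (hxbarode t ht)
      have hgcont : ContinuousOn g (Icc 0 T) := fun t ht =>
        (hgder t ht).continuousAt.continuousWithinAt
      have hbound : ∀ t ∈ Ico (0 : ℝ) T, ‖g' t‖ ≤ μ * ‖g t‖ + D * t ^ k := by
        intro t ht
        have ht' : t ∈ Icc (0 : ℝ) T := Ico_subset_Icc_self ht
        have h1 : ‖g' t‖ ≤ μ * ‖x (k + 1) t - xbar t‖ + η * ‖x k t - xbar t‖ := by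
          simp only [hg']
          rw [← hsplit (xbar t)]
          exact hLip _ _ _ _
        have h2 : η * ‖x k t - xbar t‖ ≤ D * t ^ k := by
          have := ih t ht'
          calc η * ‖x k t - xbar t‖ ≤ η * (C ^ k * η ^ k * t ^ k / (Nat.factorial k) * M) := by
                exact mul_le_mul_of_nonneg_left this hη
            _ = D * t ^ k := by rw [hD]; ring
        calc ‖g' t‖ ≤ μ * ‖x (k + 1) t - xbar t‖ + η * ‖x k t - xbar t‖ := h1
          _ ≤ μ * ‖g t‖ + D * t ^ k := by
              rw [hg]
              linarith
      have h0 : g 0 = 0 := by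
        rw [hg]
        simp [hxinit k, hxbarinit]
      have key := gronwall_poly_forcing k hμ hDnn hgcont
        (fun t ht => (hgder t (Ico_subset_Icc_self ht)).hasDerivWithinAt) h0 hbound
      intro t ht
      have h3 := key t ht
      have h4 : D / (k + 1) * t ^ (k + 1) * Real.exp (μ * t) ≤
          D / (k + 1) * t ^ (k + 1) * C := by
        have hexp : Real.exp (μ * t) ≤ C := by
          rw [hC]
          exact Real.exp_le_exp.2 (mul_le_mul_of_nonneg_left ht.2 hμ)
        have : (0 : ℝ) ≤ D / (k + 1) * t ^ (k + 1) :=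
          mul_nonneg (div_nonneg hDnn (by positivity)) (pow_nonneg ht.1 _)
        exact mul_le_mul_of_nonneg_left hexp this
      have h5 : D / (k + 1) * t ^ (k + 1) * C =
          C ^ (k + 1) * η ^ (k + 1) * t ^ (k + 1) / (Nat.factorial (k + 1)) * M := by
        rw [hD, Nat.factorial_succ]
        have hfac : (0 : ℝ) < (Nat.factorial k : ℝ) := by
          exact_mod_cast Nat.factorial_pos k
        push_cast
        field_simp
        ring
      rw [hg] at h3
      calc ‖x (k + 1) t - xbar t‖ ≤ D / (k + 1) * t ^ (k + 1) * Real.exp (μ * t) := h3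
        _ ≤ D / (k + 1) * t ^ (k + 1) * C := h4
        _ = C ^ (k + 1) * η ^ (k + 1) * t ^ (k + 1) / (Nat.factorial (k + 1)) * M := h5
  intro k t ht
  refine (claim k t ht).trans ?_
  gcongr
  all_goals first | exact hMnn | exact ht.1 | exact ht.2
end

section
/- The m-th block of the fixed point (I − A)⁻¹ b, where A is the strictly block lower triangular matrix with (i,j) block C₁^{i−j−1}C₂ (i > j) and b has i-th block C₁^{i−1}(C₁+C₂)x₀, equals (C₁ + C₂)^m x₀ for m = 1,…,s. -/
lemma key_identity {n : ℕ} (C₁ C₂ : Matrix (Fin n) (Fin n) ℝ) (i : ℕ) :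
    (C₁ + C₂) ^ (i + 1) =
      C₁ ^ i * (C₁ + C₂) +
        ∑ j ∈ Finset.range i, C₁ ^ (i - j - 1) * C₂ * (C₁ + C₂) ^ (j + 1) := by
  induction i with
  | zero => simp
  | succ i ih =>
    rw [Finset.sum_range_succ]
    have hcongr : ∀ j ∈ Finset.range i,
        C₁ ^ (i + 1 - j - 1) * C₂ * (C₁ + C₂) ^ (j + 1)
          = C₁ * (C₁ ^ (i - j - 1) * C₂ * (C₁ + C₂) ^ (j + 1)) := by
      intro j hj
      rw [Finset.mem_range] at hj
      have : i + 1 - j - 1 = (i - j - 1) + 1 := by omega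
      simp [this, pow_succ', mul_assoc]
    rw [Finset.sum_congr rfl hcongr, ← Finset.mul_sum]
    have hs : i + 1 - i - 1 = 0 := by omega
    rw [hs, pow_zero, one_mul]
    calc (C₁ + C₂) ^ (i + 1 + 1) = (C₁ + C₂) * (C₁ + C₂) ^ (i + 1) := (pow_succ' _ _)
    _ = C₁ * (C₁ + C₂) ^ (i + 1) + C₂ * (C₁ + C₂) ^ (i + 1) := by rw [add_mul]
    _ = C₁ * (C₁ ^ i * (C₁ + C₂) + ∑ j ∈ Finset.range i, C₁ ^ (i - j - 1) * C₂ * (C₁ + C₂) ^ (j + 1)) + C₂ * (C₁ + C₂) ^ (i + 1) := by rw [← ih]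
    _ = C₁ ^ (i + 1) * (C₁ + C₂) +
        (C₁ * ∑ j ∈ Finset.range i, C₁ ^ (i - j - 1) * C₂ * (C₁ + C₂) ^ (j + 1) +
          C₂ * (C₁ + C₂) ^ (i + 1)) := by simp [mul_add, pow_succ', mul_assoc, add_assoc]


/-- The `m`-th block of the fixed point `(I - A)⁻¹ b` of explicit Euler waveform
relaxation equals `(C₁ + C₂)^m x₀`, the explicit Euler solution of the undecomposed
system. -/
theorem explicit_euler_wr_fixed_point_blocks
    (n s : ℕ) (hs : 1 ≤ s) (C₁ C₂ : Matrix (Fin n) (Fin n) ℝ) (x₀ : Fin n → ℝ)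
    (A : Matrix (Fin s × Fin n) (Fin s × Fin n) ℝ)
    (hA : ∀ i j : Fin s, ∀ a b : Fin n,
      A (i, a) (j, b) =
        if (j : ℕ) < (i : ℕ) then (C₁ ^ ((i : ℕ) - (j : ℕ) - 1) * C₂) a b else 0)
    (bvec : Fin s × Fin n → ℝ)
    (hb : ∀ i : Fin s, ∀ a : Fin n,
      bvec (i, a) = ((C₁ ^ (i : ℕ) * (C₁ + C₂)).mulVec x₀) a) :
    ∀ i : Fin s, ∀ a : Fin n,
      ((1 - A)⁻¹.mulVec bvec) (i, a) = (((C₁ + C₂) ^ ((i : ℕ) + 1)).mulVec x₀) a := by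
  -- candidate solution
  set v : Fin s × Fin n → ℝ :=
    fun p => (((C₁ + C₂) ^ ((p.1 : ℕ) + 1)).mulVec x₀) p.2 with hv
  -- the system is solved by v
  have hsolve : (1 - A).mulVec v = bvec := by
    funext p
    obtain ⟨i, a⟩ := p
    rw [Matrix.sub_mulVec, Matrix.one_mulVec]
    have hAv : A.mulVec v (i, a) =
        ∑ j ∈ Finset.range (i : ℕ),
          ((C₁ ^ ((i : ℕ) - j - 1) * C₂ * (C₁ + C₂) ^ (j + 1)).mulVec x₀) a := by
      have h1 : A.mulVec v (i, a) =
          ∑ j : Fin s, ∑ b : Fin n, A (i, a) (j, b) * v (j, b) := by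
        rw [Matrix.mulVec, dotProduct, Fintype.sum_prod_type]
      rw [h1]
      have h2 : ∀ j : Fin s, ∑ b : Fin n, A (i, a) (j, b) * v (j, b)
          = if (j : ℕ) < (i : ℕ) then
              ((C₁ ^ ((i : ℕ) - (j : ℕ) - 1) * C₂ * (C₁ + C₂) ^ ((j : ℕ) + 1)).mulVec x₀) a
            else 0 := by
        intro j
        by_cases hji : (j : ℕ) < (i : ℕ)
        · simp only [hji, if_true]
          rw [← Matrix.mulVec_mulVec, Matrix.mulVec, dotProduct]
          refine Finset.sum_congr rfl fun b _ => ?_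
          rw [hA]
          simp [hji, hv]
        · simp only [hji, if_false]
          apply Finset.sum_eq_zero
          intro b _
          rw [hA]
          simp [hji]
      rw [Finset.sum_congr rfl fun j _ => h2 j]
      rw [Fin.sum_univ_eq_sum_range
        (fun j => if j < (i : ℕ) then
          ((C₁ ^ ((i : ℕ) - j - 1) * C₂ * (C₁ + C₂) ^ (j + 1)).mulVec x₀) a else 0)]
      rw [← Finset.sum_filter]
      congr 1
      ext j
      simp only [Finset.mem_filter, Finset.mem_range]
      have := i.isLt
      omega
    rw [Pi.sub_apply, hAv, hb]
    have hk := key_identity C₁ C₂ (i : ℕ)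
    have : (((C₁ + C₂) ^ ((i : ℕ) + 1)).mulVec x₀) a
        = ((C₁ ^ (i : ℕ) * (C₁ + C₂)).mulVec x₀) a
          + ∑ j ∈ Finset.range (i : ℕ),
              ((C₁ ^ ((i : ℕ) - j - 1) * C₂ * (C₁ + C₂) ^ (j + 1)).mulVec x₀) a := by
      rw [hk, Matrix.add_mulVec]
      simp only [Pi.add_apply]
      congr 1
      induction (Finset.range (i : ℕ)) using Finset.induction with
      | empty => simp [Matrix.mulVec]
      | insert _ _ hx ih =>
        rw [Finset.sum_insert hx, Finset.sum_insert hx, Matrix.add_mulVec, Pi.add_apply, ih]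
    rw [hv]
    simp only
    rw [this]
    ring
  -- invertibility
  have hdet : (1 - A).det = 1 := by
    set f : Fin s × Fin n → (Fin s)ᵒᵈ := fun p => OrderDual.toDual p.1 with hf
    have hAtri : A.BlockTriangular f := by
      rintro ⟨i, a⟩ ⟨j, b⟩ hij
      have : (i : ℕ) < (j : ℕ) := hij
      rw [hA]
      simp [Nat.not_lt.mpr (le_of_lt this), Nat.lt_irrefl]
    have htri : (1 - A).BlockTriangular f :=
      Matrix.blockTriangular_one.sub hAtri
    rw [htri.det]
    apply Finset.prod_eq_one
    intro k _
    have : (1 - A).toSquareBlock f k = 1 := by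
      ext ⟨⟨i, a⟩, hp⟩ ⟨⟨j, b⟩, hq⟩
      have hij : i = j := by
        have := hp.trans hq.symm
        simpa [hf] using this
      subst hij
      simp only [Matrix.toSquareBlock_def, Matrix.sub_apply, hA]
      simp [Matrix.one_apply, Subtype.ext_iff, Prod.ext_iff]
    rw [this, Matrix.det_one]
  have hunit : IsUnit (1 - A).det := by rw [hdet]; exact isUnit_one
  intro i a
  have hfix : (1 - A)⁻¹.mulVec bvec = v := by
    rw [← hsolve, Matrix.mulVec_mulVec, Matrix.nonsing_inv_mul _ hunit, Matrix.one_mulVec]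
  rw [hfix]
end
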